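/- Let R be an almost Dedekind domain and M a maximal ideal of R. Then M is an isolated point of Max(R), endowed with the inverse (equivalently, constructible) topology, if and only if M is finitely generated as an ideal. -/

import Mathlib

/-- An integral domain is almost Dedekind if its localization at every maximal ideal
is a discrete valuation ring. -/
def AlmostDedekind (R : Type*) [CommRing R] [IsDomain R] : Prop :=
  ∀ M : MaximalSpectrum R, IsDiscreteValuationRing (Localization.AtPrime M.asIdeal)

/-- The inverse topology on the maximal spectrum: the topology generated by the
sets `V(I)` for `I` a finitely generated ideal (the complements of the
quasi-compact Zariski-open sets). -/
def invTop (R : Type*) [CommRing R] : TopologicalSpace (MaximalSpectrum R) :=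
  .generateFrom {s | ∃ I : Ideal R, I.FG ∧ s = {M | I ≤ M.asIdeal}}

private lemma map_eq_top_aux {R : Type*} [CommRing R] (P K : Ideal R) [P.IsPrime] {a : R}
    (haK : a ∈ K) (haP : a ∉ P) :
    K.map (algebraMap R (Localization.AtPrime P)) = ⊤ :=
  Ideal.eq_top_of_isUnit_mem _ (Ideal.mem_map_of_mem _ haK)
    (IsLocalization.map_units _ (⟨a, haP⟩ : P.primeCompl))

/-- In an almost Dedekind domain, a maximal ideal `M` is an isolated point of
`Max(R)` with the inverse topology if and only if `M` is finitely generated. -/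
theorem stmt1 {R : Type*} [CommRing R] [IsDomain R] (hR : AlmostDedekind R)
    (M : MaximalSpectrum R) :
    @IsOpen _ (invTop R) {M} ↔ M.asIdeal.FG := by
  letI := invTop R
  have hsingle : ∀ N : MaximalSpectrum R, M.asIdeal ≤ N.asIdeal → N = M := by
    intro N h
    exact MaximalSpectrum.ext (M.2.eq_of_le N.2.ne_top h).symm
  constructor
  · -- hard direction
    intro hopen
    -- the generating family, together with univ, is a basis
    have hbasis : TopologicalSpace.IsTopologicalBasis
        {s : Set (MaximalSpectrum R) | ∃ I : Ideal R, I.FG ∧ s = {N | I ≤ N.asIdeal}} := by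
      apply TopologicalSpace.isTopologicalBasis_of_subbasis_of_finiteInter rfl
      constructor
      · exact ⟨⊥, Submodule.fg_bot, by ext N; simp⟩
      · rintro s ⟨I, hI, rfl⟩ t ⟨J, hJ, rfl⟩
        exact ⟨I ⊔ J, Submodule.FG.sup hI hJ, by ext N; simp [sup_le_iff, Set.mem_inter_iff]⟩
    obtain ⟨t, ⟨I, hIfg, rfl⟩, hMt, hts⟩ :=
      (hbasis.isOpen_iff.mp hopen) M rfl
    -- hMt : I ≤ M.asIdeal, hts : V(I) ⊆ {M}
    by_cases hbot : M.asIdeal = ⊥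
    · rw [hbot]; exact Submodule.fg_bot
    -- find x ∈ M mapping to a uniformizer of the localization
    haveI := hR M
    obtain ⟨ϖ, hϖ⟩ := IsDiscreteValuationRing.exists_irreducible (Localization.AtPrime M.asIdeal)
    obtain ⟨⟨x, s⟩, hxs⟩ := IsLocalization.mk'_surjective M.asIdeal.primeCompl ϖ
    dsimp only at hxs
    have hx : Irreducible (algebraMap R (Localization.AtPrime M.asIdeal) x) := by
      rw [← IsLocalization.mk'_spec (Localization.AtPrime M.asIdeal) x s, hxs]
      exact (irreducible_mul_isUnit (IsLocalization.map_units _ s)).mpr hϖ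
    have hxM : x ∈ M.asIdeal := by
      rw [← IsLocalization.AtPrime.to_map_mem_maximal_iff
        (Localization.AtPrime M.asIdeal) M.asIdeal x]
      exact (IsLocalRing.mem_maximalIdeal _).mpr (mem_nonunits_iff.mpr hx.not_isUnit)
    have huni : IsLocalRing.maximalIdeal (Localization.AtPrime M.asIdeal) =
        Ideal.span {algebraMap R (Localization.AtPrime M.asIdeal) x} :=
      (IsDiscreteValuationRing.irreducible_iff_uniformizer _).mp hx
    set J : Ideal R := I ⊔ Ideal.span {x} with hJdef
    have hJfg : J.FG := Submodule.FG.sup hIfg (Submodule.fg_span_singleton x)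
    have hJle : J ≤ M.asIdeal := sup_le hMt (Ideal.span_le.mpr (by simpa using hxM))
    have key : J = M.asIdeal := by
      apply Ideal.eq_of_localization_maximal
      intro P hP
      by_cases hPM : P = M.asIdeal
      · subst hPM
        rw [Localization.AtPrime.map_eq_maximalIdeal]
        refine le_antisymm ?_ ?_
        · rw [← Localization.AtPrime.map_eq_maximalIdeal]
          exact Ideal.map_mono hJle
        · rw [huni]
          refine Ideal.span_le.mpr ?_
          simp only [Set.singleton_subset_iff]
          exact Ideal.mem_map_of_mem _ (Ideal.mem_sup_right (Ideal.mem_span_singleton_self x))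
      · -- both localizations are the whole ring
        obtain ⟨a, haI, haP⟩ : ∃ a ∈ I, a ∉ P := by
          by_contra hcon
          push_neg at hcon
          exact hPM (congrArg MaximalSpectrum.asIdeal
            (hts (show (⟨P, hP⟩ : MaximalSpectrum R) ∈ {N | I ≤ N.asIdeal} from hcon)))
        obtain ⟨b, hbM, hbP⟩ : ∃ b ∈ M.asIdeal, b ∉ P := by
          by_contra hcon
          push_neg at hcon
          exact hPM (M.2.eq_of_le hP.ne_top hcon).symm
        rw [map_eq_top_aux P J (Ideal.mem_sup_left haI) haP,
          map_eq_top_aux P M.asIdeal hbM hbP]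
    rw [← key]; exact hJfg
  · -- easy direction
    intro hfg
    have : ({M} : Set (MaximalSpectrum R)) = {N | M.asIdeal ≤ N.asIdeal} := by
      ext N
      simp only [Set.mem_singleton_iff, Set.mem_setOf_eq]
      constructor
      · rintro rfl; exact le_rfl
      · intro h; exact hsingle N h
    rw [this]
    exact TopologicalSpace.isOpen_generateFrom_of_mem ⟨M.asIdeal, hfg, rfl⟩
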